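/- arXiv:2507.22379 — 4 statements merged into one kernel-verified Lean document; each statement's English description precedes it below -/
import Mathlib

section
/- Let $\alpha \in (1,2)$ and $H \in (1-\alpha/2, 1/2)$. There exists a constant $c > 0$ such that for all $t > 0$, all $x, y \in \mathbb{R}$ with $|x-y| \ge t^{1/\alpha}$, and all $h$ with $0 < h \le \min\{\frac{3}{64}|x-y|, \frac{\pi}{4}(\frac{2}{\ln 2})^{1/\alpha} t^{1/\alpha}\}$, one has $\int_0^{\infty} (1-e^{-2t\xi^{\alpha}})(1-\cos(h\xi))(1-\cos(|x-y|\xi))\,\xi^{1-2H-\alpha}\,d\xi \ge c\, h^{2H+\alpha-2}$. -/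
open Real MeasureTheory

set_option maxHeartbeats 1000000 in
theorem stmt_10 (α H : ℝ) (hα : 1 < α) (hα2 : α < 2)
    (hH1 : 1 - α / 2 < H) (hH2 : H < 1 / 2) :
    ∃ c > 0, ∀ t : ℝ, 0 < t → ∀ x y : ℝ, |x - y| ≥ t ^ (1 / α) →
      ∀ h : ℝ, 0 < h →
        h ≤ min (3 / 64 * |x - y|) (π / 4 * (2 / Real.log 2) ^ (1 / α) * t ^ (1 / α)) →
        ∫ ξ in Set.Ioi (0:ℝ),
            (1 - Real.exp (-2 * t * ξ ^ α)) * (1 - Real.cos (h * ξ))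
              * (1 - Real.cos (|x - y| * ξ)) * ξ ^ (1 - 2 * H - α)
          ≥ c * h ^ (2 * H + α - 2) := by
  have hα0 : (0:ℝ) < α := by linarith
  set p : ℝ := 1 - 2 * H - α with hp
  have hplt : p < -1 := by rw [hp]; linarith
  have hp0 : p ≤ 0 := by linarith
  have hπp : (0:ℝ) < π ^ p := Real.rpow_pos_of_pos Real.pi_pos _
  have hc32 : (0:ℝ) < π / 2 - 3 / 32 := by
    have := Real.pi_gt_three; linarith
  refine ⟨3 / 4 * (π / 2 - 3 / 32) * π ^ p, by positivity, ?_⟩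
  intro t ht x y hxy h hh hhle
  set r := |x - y| with hrdef
  have htα : (0:ℝ) < t ^ (1 / α) := Real.rpow_pos_of_pos ht _
  have hr : 0 < r := lt_of_lt_of_le htα hxy
  have hr64 : 64 * h ≤ 3 * r := by
    have := hhle.trans (min_le_left _ _); linarith
  have hlog2 : (0:ℝ) < Real.log 2 := Real.log_pos (by norm_num)
  set L : ℝ := (2 / Real.log 2) ^ (1 / α) with hLdef
  have hL : 0 < L := Real.rpow_pos_of_pos (by positivity) _
  have hhL : h ≤ π / 4 * L * t ^ (1 / α) := hhle.trans (min_le_right _ _)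
  set a : ℝ := π / (2 * h) with hadef
  set b : ℝ := π / h with hbdef
  have ha : 0 < a := by positivity
  have hb : 0 < b := by positivity
  have hab : a ≤ b := by
    rw [hadef, hbdef, div_le_div_iff₀ (by positivity) hh]
    nlinarith [Real.pi_pos]
  set f : ℝ → ℝ := fun ξ =>
    (1 - Real.exp (-2 * t * ξ ^ α)) * (1 - Real.cos (h * ξ))
      * (1 - Real.cos (r * ξ)) * ξ ^ p with hfdef
  -- nonnegativity of f on Ioi 0
  have hf_nonneg : ∀ ξ : ℝ, 0 < ξ → 0 ≤ f ξ := by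
    intro ξ hξ
    have h1 : Real.exp (-2 * t * ξ ^ α) ≤ 1 := by
      rw [Real.exp_le_one_iff]
      have : 0 ≤ ξ ^ α := Real.rpow_nonneg hξ.le _
      nlinarith
    have h2 : Real.cos (h * ξ) ≤ 1 := Real.cos_le_one _
    have h3 : Real.cos (r * ξ) ≤ 1 := Real.cos_le_one _
    have h4 : 0 ≤ ξ ^ p := Real.rpow_nonneg hξ.le _
    have := mul_nonneg (mul_nonneg (mul_nonneg (by linarith : (0:ℝ) ≤ 1 - Real.exp (-2 * t * ξ ^ α))
      (by linarith : (0:ℝ) ≤ 1 - Real.cos (h * ξ))) (by linarith : (0:ℝ) ≤ 1 - Real.cos (r * ξ))) h4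
    exact this
  -- measurability
  have hfm : Measurable f := by
    rw [hfdef]; fun_prop
  -- integrability of f on Ioi 0
  have hfi : IntegrableOn f (Set.Ioi (0:ℝ)) := by
    have hunion : Set.Ioc (0:ℝ) 1 ∪ Set.Ioi (1:ℝ) = Set.Ioi (0:ℝ) :=
      Set.Ioc_union_Ioi_eq_Ioi (by norm_num)
    rw [← hunion]
    apply MeasureTheory.IntegrableOn.union
    · -- on Ioc 0 1, dominate by 8*t*ξ^(1-2H)
      have hg : IntegrableOn (fun ξ : ℝ => 8 * t * ξ ^ (1 - 2 * H)) (Set.Ioc (0:ℝ) 1) := by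
        have := (intervalIntegral.intervalIntegrable_rpow'
          (show (-1:ℝ) < 1 - 2 * H by linarith) (a := 0) (b := 1)).1
        exact this.const_mul (8 * t)
      refine MeasureTheory.Integrable.mono hg (hfm.aestronglyMeasurable.restrict) ?_
      filter_upwards [MeasureTheory.ae_restrict_mem measurableSet_Ioc] with ξ hξ
      obtain ⟨hξ0, hξ1⟩ := hξ
      have hξα : 0 ≤ ξ ^ α := Real.rpow_nonneg hξ0.le _
      have hA : 1 - Real.exp (-2 * t * ξ ^ α) ≤ 2 * t * ξ ^ α := by
        have := Real.add_one_le_exp (-2 * t * ξ ^ α)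
        linarith
      have hA0 : 0 ≤ 1 - Real.exp (-2 * t * ξ ^ α) := by
        rw [sub_nonneg, ← Real.exp_zero]
        apply Real.exp_le_exp.mpr
        nlinarith
      have hB : 1 - Real.cos (h * ξ) ≤ 2 := by
        have := Real.neg_one_le_cos (h * ξ); linarith
      have hB0 : 0 ≤ 1 - Real.cos (h * ξ) := by
        have := Real.cos_le_one (h * ξ); linarith
      have hC : 1 - Real.cos (r * ξ) ≤ 2 := by
        have := Real.neg_one_le_cos (r * ξ); linarith
      have hC0 : 0 ≤ 1 - Real.cos (r * ξ) := by
        have := Real.cos_le_one (r * ξ); linarith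
      have hD : 0 ≤ ξ ^ p := Real.rpow_nonneg hξ0.le _
      have key : f ξ ≤ 8 * t * ξ ^ (1 - 2 * H) := by
        simp only [hfdef]
        have e : ξ ^ α * ξ ^ p = ξ ^ (1 - 2 * H) := by
          rw [← Real.rpow_add hξ0, hp]; ring_nf
        calc f ξ ≤ (2 * t * ξ ^ α) * 2 * 2 * ξ ^ p := by
              apply mul_le_mul _ le_rfl hD (by positivity)
              apply mul_le_mul _ hC hC0 (by positivity)
              exact mul_le_mul hA hB hB0 (by positivity)
          _ = 8 * t * (ξ ^ α * ξ ^ p) := by ring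
          _ = 8 * t * ξ ^ (1 - 2 * H) := by rw [e]
      rw [Real.norm_eq_abs, Real.norm_eq_abs, abs_of_nonneg (hf_nonneg ξ hξ0)]
      refine key.trans (le_abs_self _)
    · -- on Ioi 1, dominate by 4*ξ^p
      have hg : IntegrableOn (fun ξ : ℝ => 4 * ξ ^ p) (Set.Ioi (1:ℝ)) :=
        (integrableOn_Ioi_rpow_of_lt hplt one_pos).const_mul 4
      refine MeasureTheory.Integrable.mono hg (hfm.aestronglyMeasurable.restrict) ?_
      filter_upwards [MeasureTheory.ae_restrict_mem measurableSet_Ioi] with ξ hξ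
      have hξ0 : (0:ℝ) < ξ := lt_trans one_pos hξ
      have hξα : 0 ≤ ξ ^ α := Real.rpow_nonneg hξ0.le _
      have hA : 1 - Real.exp (-2 * t * ξ ^ α) ≤ 1 := by
        have := Real.exp_pos (-2 * t * ξ ^ α); linarith
      have hA0 : 0 ≤ 1 - Real.exp (-2 * t * ξ ^ α) := by
        rw [sub_nonneg, ← Real.exp_zero]
        apply Real.exp_le_exp.mpr
        nlinarith
      have hB : 1 - Real.cos (h * ξ) ≤ 2 := by
        have := Real.neg_one_le_cos (h * ξ); linarith
      have hB0 : 0 ≤ 1 - Real.cos (h * ξ) := by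
        have := Real.cos_le_one (h * ξ); linarith
      have hC : 1 - Real.cos (r * ξ) ≤ 2 := by
        have := Real.neg_one_le_cos (r * ξ); linarith
      have hC0 : 0 ≤ 1 - Real.cos (r * ξ) := by
        have := Real.cos_le_one (r * ξ); linarith
      have hD : 0 ≤ ξ ^ p := Real.rpow_nonneg hξ0.le _
      have key : f ξ ≤ 4 * ξ ^ p := by
        simp only [hfdef]
        calc f ξ ≤ 1 * 2 * 2 * ξ ^ p := by
              apply mul_le_mul _ le_rfl hD (by positivity)
              apply mul_le_mul _ hC hC0 (by positivity)
              exact mul_le_mul hA hB hB0 (by norm_num)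
          _ = 4 * ξ ^ p := by ring
      rw [Real.norm_eq_abs, Real.norm_eq_abs, abs_of_nonneg (hf_nonneg ξ hξ0)]
      refine key.trans (le_abs_self _)
  -- constant K
  set K : ℝ := 3 / 4 * (π / h) ^ p with hKdef
  have hK : 0 < K := by
    have : (0:ℝ) < (π / h) ^ p := Real.rpow_pos_of_pos (by positivity) _
    positivity
  -- pointwise lower bound on Ioc a b
  have hpoint : ∀ ξ ∈ Set.Ioc a b, K * (1 - Real.cos (r * ξ)) ≤ f ξ := by
    intro ξ hξ
    obtain ⟨hξa, hξb⟩ := hξ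
    have hξ0 : 0 < ξ := lt_trans ha hξa
    -- exp bound
    have hE1 : Real.exp (-2 * t * ξ ^ α) ≤ 1 / 4 := by
      have h1 : 2 / (L * t ^ (1 / α)) ≤ a := by
        rw [hadef, div_le_div_iff₀ (by positivity) (by positivity)]
        nlinarith [hL, htα, hh]
      have hξge : 2 / (L * t ^ (1 / α)) ≤ ξ := le_trans h1 hξa.le
      have hbase : (0:ℝ) < 2 / (L * t ^ (1 / α)) := by positivity
      have h2 : (2 / (L * t ^ (1 / α))) ^ α ≤ ξ ^ α :=
        Real.rpow_le_rpow hbase.le hξge hα0.le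
      have hLα : L ^ α = 2 / Real.log 2 := by
        rw [hLdef, ← Real.rpow_mul (by positivity), one_div_mul_cancel (ne_of_gt hα0),
          Real.rpow_one]
      have htαα : (t ^ (1 / α)) ^ α = t := by
        rw [← Real.rpow_mul ht.le, one_div_mul_cancel (ne_of_gt hα0), Real.rpow_one]
      have h3 : (2 / (L * t ^ (1 / α))) ^ α = 2 ^ α * (Real.log 2 / (2 * t)) := by
        rw [Real.div_rpow (by norm_num) (by positivity), Real.mul_rpow hL.le htα.le,
          hLα, htαα]
        field_simp
      have h2α : (2:ℝ) ≤ 2 ^ α := by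
        calc (2:ℝ) = 2 ^ (1:ℝ) := (Real.rpow_one 2).symm
          _ ≤ 2 ^ α := Real.rpow_le_rpow_of_exponent_le (by norm_num) hα.le
      have h4 : Real.log 2 / t ≤ ξ ^ α := by
        calc Real.log 2 / t = 2 * (Real.log 2 / (2 * t)) := by field_simp
          _ ≤ 2 ^ α * (Real.log 2 / (2 * t)) := by
              apply mul_le_mul_of_nonneg_right h2α (by positivity)
          _ = (2 / (L * t ^ (1 / α))) ^ α := h3.symm
          _ ≤ ξ ^ α := h2
      have h5 : -2 * t * ξ ^ α ≤ -(2 * Real.log 2) := by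
        have : Real.log 2 ≤ t * ξ ^ α := by
          rw [div_le_iff₀ ht] at h4; linarith [h4]
        nlinarith
      calc Real.exp (-2 * t * ξ ^ α) ≤ Real.exp (-(2 * Real.log 2)) :=
            Real.exp_le_exp.mpr h5
        _ = 1 / 4 := by
            rw [Real.exp_neg, show 2 * Real.log 2 = Real.log 2 + Real.log 2 by ring,
              Real.exp_add, Real.exp_log (by norm_num : (0:ℝ) < 2)]
            norm_num
    have hA : 3 / 4 ≤ 1 - Real.exp (-2 * t * ξ ^ α) := by linarith
    -- cos(hξ) ≤ 0
    have hE2 : Real.cos (h * ξ) ≤ 0 := by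
      apply Real.cos_nonpos_of_pi_div_two_le_of_le
      · calc π / 2 = h * a := by rw [hadef]; field_simp
          _ ≤ h * ξ := by nlinarith [hξa]
      · calc h * ξ ≤ h * b := by nlinarith [hξb]
          _ = π := by rw [hbdef]; field_simp
          _ ≤ π + π / 2 := by linarith [Real.pi_pos]
    have hB : 1 ≤ 1 - Real.cos (h * ξ) := by linarith
    have hC0 : 0 ≤ 1 - Real.cos (r * ξ) := by
      have := Real.cos_le_one (r * ξ); linarith
    have hD : (π / h) ^ p ≤ ξ ^ p := by
      apply Real.rpow_le_rpow_of_nonpos hξ0 _ hp0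
      exact hξb
    have hD0 : (0:ℝ) ≤ (π / h) ^ p := Real.rpow_nonneg (by positivity) _
    have hA0 : (0:ℝ) ≤ 1 - Real.exp (-2 * t * ξ ^ α) := by linarith
    have hB0 : (0:ℝ) ≤ 1 - Real.cos (h * ξ) := by linarith
    have s1 : (3:ℝ) / 4 * 1 ≤ (1 - Real.exp (-2 * t * ξ ^ α)) * (1 - Real.cos (h * ξ)) :=
      mul_le_mul hA hB (by norm_num) hA0
    have s2 : (3:ℝ) / 4 * 1 * (1 - Real.cos (r * ξ))
        ≤ (1 - Real.exp (-2 * t * ξ ^ α)) * (1 - Real.cos (h * ξ)) * (1 - Real.cos (r * ξ)) :=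
      mul_le_mul_of_nonneg_right s1 hC0
    have s3 : (3:ℝ) / 4 * 1 * (1 - Real.cos (r * ξ)) * ((π / h) ^ p)
        ≤ (1 - Real.exp (-2 * t * ξ ^ α)) * (1 - Real.cos (h * ξ)) * (1 - Real.cos (r * ξ))
          * ξ ^ p :=
      mul_le_mul s2 hD hD0 (mul_nonneg (mul_nonneg hA0 hB0) hC0)
    calc K * (1 - Real.cos (r * ξ))
        = 3 / 4 * 1 * (1 - Real.cos (r * ξ)) * ((π / h) ^ p) := by rw [hKdef]; ring
      _ ≤ (1 - Real.exp (-2 * t * ξ ^ α)) * (1 - Real.cos (h * ξ)) * (1 - Real.cos (r * ξ))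
            * ξ ^ p := s3
      _ = f ξ := by simp only [hfdef]
  -- integrability of the minorant on Ioc a b
  have hcont : Continuous (fun ξ : ℝ => K * (1 - Real.cos (r * ξ))) :=
    continuous_const.mul (continuous_const.sub
      (Real.continuous_cos.comp (continuous_const.mul continuous_id)))
  have hgi : IntegrableOn (fun ξ : ℝ => K * (1 - Real.cos (r * ξ))) (Set.Ioc a b) :=
    hcont.integrableOn_Ioc
  -- value of the minorant integral
  have hval : ∫ ξ in Set.Ioc a b, K * (1 - Real.cos (r * ξ))
      = K * ((b - a) - (Real.sin (r * b) - Real.sin (r * a)) / r) := by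
    rw [← intervalIntegral.integral_of_le hab]
    rw [intervalIntegral.integral_const_mul]
    congr 1
    have hcos : ∫ x in a..b, Real.cos (r * x)
        = (Real.sin (r * b) - Real.sin (r * a)) / r := by
      rw [intervalIntegral.integral_comp_mul_left (fun x => Real.cos x) (ne_of_gt hr)]
      rw [integral_cos]
      rw [smul_eq_mul]
      field_simp
    rw [intervalIntegral.integral_sub intervalIntegrable_const
      ((show Continuous fun x : ℝ => Real.cos (r * x) by fun_prop).intervalIntegrable a b),
      intervalIntegral.integral_const, hcos]
    simp [smul_eq_mul]
  -- chain of inequalities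
  have step1 : ∫ ξ in Set.Ioc a b, f ξ ≤ ∫ ξ in Set.Ioi (0:ℝ), f ξ := by
    apply MeasureTheory.setIntegral_mono_set hfi
    · filter_upwards [MeasureTheory.ae_restrict_mem measurableSet_Ioi] with ξ hξ
      exact hf_nonneg ξ hξ
    · apply HasSubset.Subset.eventuallyLE
      intro ξ hξ
      exact lt_trans ha hξ.1
  have step2 : ∫ ξ in Set.Ioc a b, K * (1 - Real.cos (r * ξ)) ≤ ∫ ξ in Set.Ioc a b, f ξ := by
    apply MeasureTheory.setIntegral_mono_on hgi _ measurableSet_Ioc hpoint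
    apply hfi.mono_set
    intro ξ hξ
    exact lt_trans ha hξ.1
  have hsin1 : Real.sin (r * b) - Real.sin (r * a) ≤ 2 := by
    have := Real.sin_le_one (r * b)
    have := Real.neg_one_le_sin (r * a)
    linarith
  have step3 : K * (π / (2 * h) - 3 / (32 * h))
      ≤ K * ((b - a) - (Real.sin (r * b) - Real.sin (r * a)) / r) := by
    apply mul_le_mul_of_nonneg_left _ hK.le
    have hba : b - a = π / (2 * h) := by
      rw [hadef, hbdef]; field_simp; ring
    have hdiv : (Real.sin (r * b) - Real.sin (r * a)) / r ≤ 3 / (32 * h) := by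
      calc (Real.sin (r * b) - Real.sin (r * a)) / r ≤ 2 / r := by
            gcongr
        _ ≤ 3 / (32 * h) := by
            rw [div_le_div_iff₀ hr (by positivity)]
            linarith
    linarith [hba]
  -- final algebra : K * (π/(2h) - 3/(32h)) = c * h^(2H+α-2)
  have hfinal : 3 / 4 * (π / 2 - 3 / 32) * π ^ p * h ^ (2 * H + α - 2)
      = K * (π / (2 * h) - 3 / (32 * h)) := by
    have e1 : (π / h) ^ p = π ^ p / h ^ p := Real.div_rpow Real.pi_pos.le hh.le _
    have e2 : h ^ (2 * H + α - 2) = (h ^ p)⁻¹ / h := by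
      have : (2 * H + α - 2 : ℝ) = -p - 1 := by rw [hp]; ring
      rw [this, show (-p - 1 : ℝ) = -p - 1 from rfl, Real.rpow_sub hh, Real.rpow_one,
        Real.rpow_neg hh.le]
    have hhp : (0:ℝ) < h ^ p := Real.rpow_pos_of_pos hh _
    rw [e2, hKdef, e1]
    field_simp
  rw [ge_iff_le, hfinal]
  calc K * (π / (2 * h) - 3 / (32 * h))
      ≤ K * ((b - a) - (Real.sin (r * b) - Real.sin (r * a)) / r) := step3
    _ = ∫ ξ in Set.Ioc a b, K * (1 - Real.cos (r * ξ)) := hval.symm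
    _ ≤ ∫ ξ in Set.Ioc a b, f ξ := step2
    _ ≤ ∫ ξ in Set.Ioi (0:ℝ), f ξ := step1
end

section
/- Let $\alpha \in (1,2)$ and $H \in (1-\alpha/2, 1/2)$. There exists a constant $c > 0$ such that for all $x, y \in \mathbb{R}$ with $x \ne y$ and all $\tau$ with $0 < \tau \le \left(\frac{3}{32}\right)^{\alpha}|x-y|^{\alpha}$, $\int_0^{\infty} (1-e^{-2\tau\xi^{\alpha}})(1-\cos(\xi|x-y|))\,\xi^{1-2H-\alpha}\,d\xi \ge c\, \tau^{\frac{2H+\alpha-2}{\alpha}}$. -/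
open Real MeasureTheory Set

set_option maxHeartbeats 1000000

lemma stmt11_nonneg (α H τ r : ℝ) (hτ : 0 ≤ τ) {ξ : ℝ} (hξ : 0 < ξ) :
    0 ≤ (1 - Real.exp (-2 * τ * ξ ^ α)) * (1 - Real.cos (ξ * r)) * ξ ^ (1 - 2 * H - α) := by
  have h1 : Real.exp (-2 * τ * ξ ^ α) ≤ 1 := by
    rw [← Real.exp_zero]
    apply Real.exp_le_exp.mpr
    have : (0:ℝ) ≤ ξ ^ α := Real.rpow_nonneg hξ.le α
    nlinarith
  have h2 : Real.cos (ξ * r) ≤ 1 := Real.cos_le_one _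
  have h3 : (0:ℝ) ≤ ξ ^ (1 - 2 * H - α) := Real.rpow_nonneg hξ.le _
  have := mul_nonneg (mul_nonneg (by linarith : (0:ℝ) ≤ 1 - Real.exp (-2 * τ * ξ ^ α))
    (by linarith : (0:ℝ) ≤ 1 - Real.cos (ξ * r))) h3
  linarith

lemma stmt11_integrable (α H τ r : ℝ) (hα : 1 < α) (hH2 : H < 1 / 2)
    (hp1 : 1 - 2 * H - α < -1) (hτ : 0 < τ) :
    IntegrableOn
      (fun ξ : ℝ => (1 - Real.exp (-2 * τ * ξ ^ α)) * (1 - Real.cos (ξ * r)) * ξ ^ (1 - 2 * H - α))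
      (Set.Ioi 0) := by
  have hα0 : (0:ℝ) < α := by linarith
  set p : ℝ := 1 - 2 * H - α with hp
  set f : ℝ → ℝ := fun ξ => (1 - Real.exp (-2 * τ * ξ ^ α)) * (1 - Real.cos (ξ * r)) * ξ ^ p
    with hf
  have hcont : ContinuousOn f (Set.Ioi 0) := by
    apply ContinuousOn.mul
    · apply ContinuousOn.mul
      · apply continuousOn_const.sub
        apply Real.continuous_exp.comp_continuousOn
        apply continuousOn_const.mul
        intro x hx
        exact (Real.continuousAt_rpow_const x α (Or.inl (ne_of_gt hx))).continuousWithinAt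
      · exact (continuous_const.sub
          (Real.continuous_cos.comp (continuous_id.mul continuous_const))).continuousOn
    · intro x hx
      exact (Real.continuousAt_rpow_const x p (Or.inl (ne_of_gt hx))).continuousWithinAt
  have hmeas : AEStronglyMeasurable f (volume.restrict (Set.Ioi (0:ℝ))) :=
    hcont.aestronglyMeasurable measurableSet_Ioi
  rw [← Set.Ioc_union_Ioi_eq_Ioi (zero_le_one : (0:ℝ) ≤ 1)]
  apply IntegrableOn.union
  · -- on Ioc 0 1
    apply Integrable.mono' (g := fun ξ : ℝ => (4 * τ) * ξ ^ (1 - 2 * H))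
    · have := (intervalIntegral.intervalIntegrable_rpow'
        (show (-1:ℝ) < 1 - 2 * H by linarith) (a := 0) (b := 1))
      have h2 := (intervalIntegrable_iff_integrableOn_Ioc_of_le (zero_le_one : (0:ℝ) ≤ 1)).mp this
      exact h2.const_mul _
    · exact hmeas.mono_measure (Measure.restrict_mono Set.Ioc_subset_Ioi_self le_rfl)
    · filter_upwards [ae_restrict_mem measurableSet_Ioc] with ξ hξ
      have hξ0 : 0 < ξ := hξ.1
      rw [Real.norm_eq_abs, abs_of_nonneg (stmt11_nonneg α H τ r hτ.le hξ0)]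
      have e1 : 1 - Real.exp (-2 * τ * ξ ^ α) ≤ 2 * τ * ξ ^ α := by
        have h := Real.add_one_le_exp (-(2 * τ * ξ ^ α))
        have : -2 * τ * ξ ^ α = -(2 * τ * ξ ^ α) := by ring
        rw [this]; linarith
      have e2 : 1 - Real.cos (ξ * r) ≤ 2 := by
        have := Real.neg_one_le_cos (ξ * r); linarith
      have e0 : (0:ℝ) ≤ 1 - Real.exp (-2 * τ * ξ ^ α) := by
        have : Real.exp (-2 * τ * ξ ^ α) ≤ 1 := by
          rw [← Real.exp_zero]
          apply Real.exp_le_exp.mpr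
          have : (0:ℝ) ≤ ξ ^ α := Real.rpow_nonneg hξ0.le α
          nlinarith
        linarith
      have e0' : (0:ℝ) ≤ 1 - Real.cos (ξ * r) := by
        have := Real.cos_le_one (ξ * r); linarith
      have e3 : (0:ℝ) ≤ ξ ^ p := Real.rpow_nonneg hξ0.le _
      have e4 : (0:ℝ) ≤ ξ ^ α := Real.rpow_nonneg hξ0.le _
      have key : f ξ ≤ (2 * τ * ξ ^ α) * 2 * ξ ^ p := by
        apply mul_le_mul _ le_rfl e3 (by positivity)
        exact mul_le_mul e1 e2 e0' (by positivity)
      have hsplit : ξ ^ (1 - 2 * H) = ξ ^ α * ξ ^ p := by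
        rw [← Real.rpow_add hξ0]
        congr 1
        rw [hp]; ring
      calc f ξ ≤ (2 * τ * ξ ^ α) * 2 * ξ ^ p := key
        _ = (4 * τ) * (ξ ^ α * ξ ^ p) := by ring
        _ = (4 * τ) * ξ ^ (1 - 2 * H) := by rw [← hsplit]
  · -- on Ioi 1
    have hg : IntegrableOn (fun ξ : ℝ => 2 * ξ ^ p) (Set.Ioi (1:ℝ)) :=
      (integrableOn_Ioi_rpow_of_lt hp1 one_pos).const_mul 2
    have hm : AEStronglyMeasurable f (volume.restrict (Set.Ioi (1:ℝ))) :=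
      hmeas.mono_measure (Measure.restrict_mono (Set.Ioi_subset_Ioi zero_le_one) le_rfl)
    refine Integrable.mono' hg hm ?_
    filter_upwards [ae_restrict_mem measurableSet_Ioi] with ξ hξ
    have hξ0 : (0:ℝ) < ξ := lt_trans one_pos hξ
    rw [Real.norm_eq_abs, abs_of_nonneg (stmt11_nonneg α H τ r hτ.le hξ0)]
    have e1 : 1 - Real.exp (-2 * τ * ξ ^ α) ≤ 1 := by
      have := Real.exp_pos (-2 * τ * ξ ^ α); linarith
    have e2 : 1 - Real.cos (ξ * r) ≤ 2 := by
      have := Real.neg_one_le_cos (ξ * r); linarith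
    have e0' : (0:ℝ) ≤ 1 - Real.cos (ξ * r) := by
      have := Real.cos_le_one (ξ * r); linarith
    have e3 : (0:ℝ) ≤ ξ ^ p := Real.rpow_nonneg hξ0.le _
    have e0 : (0:ℝ) ≤ 1 - Real.exp (-2 * τ * ξ ^ α) := by
      have : Real.exp (-2 * τ * ξ ^ α) ≤ 1 := by
        rw [← Real.exp_zero]
        apply Real.exp_le_exp.mpr
        have : (0:ℝ) ≤ ξ ^ α := Real.rpow_nonneg hξ0.le α
        nlinarith
      linarith
    calc f ξ ≤ 1 * 2 * ξ ^ p := by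
          apply mul_le_mul _ le_rfl e3 (by norm_num)
          exact mul_le_mul e1 e2 e0' (by norm_num)
      _ = 2 * ξ ^ p := by ring

theorem stmt_11 (α H : ℝ) (hα : 1 < α) (hα2 : α < 2)
    (hH1 : 1 - α / 2 < H) (hH2 : H < 1 / 2) :
    ∃ c > 0, ∀ x y : ℝ, x ≠ y → ∀ τ : ℝ, 0 < τ → τ ≤ (3 / 32) ^ α * |x - y| ^ α →
      ∫ ξ in Set.Ioi (0:ℝ),
          (1 - Real.exp (-2 * τ * ξ ^ α)) * (1 - Real.cos (ξ * |x - y|)) * ξ ^ (1 - 2 * H - α)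
        ≥ c * τ ^ ((2 * H + α - 2) / α) := by
  have hα0 : (0:ℝ) < α := by linarith
  set p : ℝ := 1 - 2 * H - α with hp
  have hp1 : p < -1 := by rw [hp]; linarith
  have hexp2 : Real.exp (-2) < 1 := by
    rw [← Real.exp_zero]; exact Real.exp_lt_exp.mpr (by norm_num)
  refine ⟨13 / 16 * (1 - Real.exp (-2)) * 2 ^ p,
    mul_pos (mul_pos (by norm_num) (by linarith)) (Real.rpow_pos_of_pos two_pos p), ?_⟩
  intro x y hxy τ hτ hτle
  set r := |x - y| with hrdef
  have hr0 : 0 < r := abs_pos.mpr (sub_ne_zero.mpr hxy)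
  set A : ℝ := τ ^ (-(1 / α)) with hA
  have hA0 : 0 < A := Real.rpow_pos_of_pos hτ _
  set f : ℝ → ℝ := fun ξ => (1 - Real.exp (-2 * τ * ξ ^ α)) * (1 - Real.cos (ξ * r)) * ξ ^ p
    with hf
  -- basic facts
  have ht0 : 0 < τ ^ (1 / α) := Real.rpow_pos_of_pos hτ _
  have ht : τ ^ (1 / α) ≤ 3 / 32 * r := by
    have h1 : (3 / 32 : ℝ) ^ α * r ^ α = (3 / 32 * r) ^ α :=
      (Real.mul_rpow (by norm_num) hr0.le).symm
    have h2 : τ ^ (1 / α) ≤ ((3 / 32 * r) ^ α) ^ (1 / α) := by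
      apply Real.rpow_le_rpow hτ.le _ (by positivity)
      rw [← h1]; exact hτle
    rwa [← Real.rpow_mul (by positivity), mul_one_div_cancel hα0.ne', Real.rpow_one] at h2
  have hAinv : A = (τ ^ (1 / α))⁻¹ := by
    rw [hA, Real.rpow_neg hτ.le]
  have hAr : 32 / 3 ≤ A * r := by
    rw [hAinv]
    rw [inv_mul_eq_div, le_div_iff₀ ht0]
    nlinarith
  have hτAα : τ * A ^ α = 1 := by
    have h1 : A ^ α = τ ^ (-(1:ℝ)) := by
      rw [hA, ← Real.rpow_mul hτ.le]
      congr 1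
      field_simp
    rw [h1, Real.rpow_neg_one]
    exact mul_inv_cancel₀ hτ.ne'
  have hAlt : A < 2 * A := by linarith
  -- pointwise bound on Ioc A (2A)
  set g : ℝ → ℝ := fun ξ => (1 - Real.exp (-2)) * (2 * A) ^ p * (1 - Real.cos (ξ * r)) with hg
  have hpt : ∀ ξ ∈ Set.Ioc A (2 * A), g ξ ≤ f ξ := by
    intro ξ hξ
    have hξ0 : 0 < ξ := hA0.trans hξ.1
    have h1 : 1 - Real.exp (-2) ≤ 1 - Real.exp (-2 * τ * ξ ^ α) := by
      have hmono : ξ ^ α ≥ A ^ α := Real.rpow_le_rpow hA0.le hξ.1.le hα0.le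
      have : τ * ξ ^ α ≥ 1 := by nlinarith
      have : -2 * τ * ξ ^ α ≤ -2 := by nlinarith
      have := Real.exp_le_exp.mpr this
      linarith
    have h2 : (2 * A) ^ p ≤ ξ ^ p :=
      Real.rpow_le_rpow_of_nonpos hξ0 hξ.2 (by linarith)
    have h3 : (0:ℝ) ≤ 1 - Real.cos (ξ * r) := by
      have := Real.cos_le_one (ξ * r); linarith
    have h4 : (0:ℝ) ≤ 1 - Real.exp (-2) := by linarith
    have h5 : (0:ℝ) ≤ (2 * A) ^ p := Real.rpow_nonneg (by positivity) _
    calc g ξ = (1 - Real.exp (-2)) * (1 - Real.cos (ξ * r)) * (2 * A) ^ p := by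
          rw [hg]; ring
      _ ≤ (1 - Real.exp (-2 * τ * ξ ^ α)) * (1 - Real.cos (ξ * r)) * ξ ^ p := by
          apply mul_le_mul _ h2 h5 _
          · exact mul_le_mul h1 le_rfl h3 (by linarith)
          · have := mul_nonneg h4 h3
            nlinarith [Real.cos_le_one (ξ * r), Real.exp_pos (-2 * τ * ξ ^ α)]
      _ = f ξ := rfl
  have hInt : IntegrableOn f (Set.Ioi 0) :=
    stmt11_integrable α H τ r hα hH2 hp1 hτ
  have hsub : Set.Ioc A (2 * A) ⊆ Set.Ioi (0:ℝ) := fun ξ hξ => hA0.trans hξ.1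
  have hgint : IntegrableOn g (Set.Ioc A (2 * A)) := by
    apply Continuous.integrableOn_Ioc
    exact continuous_const.mul
      (continuous_const.sub (Real.continuous_cos.comp (continuous_id.mul continuous_const)))
  -- compute the integral of 1 - cos(ξ r)
  have hIcos : ∫ ξ in Set.Ioc A (2 * A), (1 - Real.cos (ξ * r))
      = A - (Real.sin (2 * A * r) - Real.sin (A * r)) / r := by
    rw [← intervalIntegral.integral_of_le hAlt.le]
    have hderiv : ∀ ξ ∈ Set.uIcc A (2 * A),
        HasDerivAt (fun u : ℝ => u - Real.sin (u * r) / r) (1 - Real.cos (ξ * r)) ξ := by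
      intro ξ _
      have h := ((Real.hasDerivAt_sin (ξ * r)).comp ξ
        ((hasDerivAt_id ξ).mul_const r)).div_const r
      have h2 := (hasDerivAt_id ξ).sub h
      rw [show 1 - Real.cos (ξ * r) = 1 - Real.cos (ξ * r) * (1 * r) / r by
        rw [one_mul, mul_div_assoc, div_self hr0.ne', mul_one]]
      exact h2
    rw [intervalIntegral.integral_eq_sub_of_hasDerivAt hderiv]
    · ring
    · apply Continuous.intervalIntegrable
      exact continuous_const.sub (Real.continuous_cos.comp (continuous_id.mul continuous_const))
  have hcosLB : 13 / 16 * A ≤ A - (Real.sin (2 * A * r) - Real.sin (A * r)) / r := by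
    have hs1 := Real.sin_le_one (2 * A * r)
    have hs2 := Real.neg_one_le_sin (A * r)
    have hdiv : (Real.sin (2 * A * r) - Real.sin (A * r)) / r ≤ 2 / r := by
      exact (div_le_div_iff_of_pos_right hr0).mpr (by linarith)
    have h2r : 2 / r ≤ 3 / 16 * A := by
      rw [div_le_iff₀ hr0]
      nlinarith
    linarith
  -- final exponent computation
  have hApow : (2 * A) ^ p * (13 / 16 * A)
      = 13 / 16 * 2 ^ p * τ ^ ((2 * H + α - 2) / α) := by
    have h1 : (2 * A) ^ p = 2 ^ p * A ^ p := Real.mul_rpow (by norm_num) hA0.le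
    have h2 : A ^ p * A = A ^ (p + 1) := (Real.rpow_add_one hA0.ne' p).symm
    have h3 : A ^ (p + 1) = τ ^ ((2 * H + α - 2) / α) := by
      rw [hA, ← Real.rpow_mul hτ.le]
      congr 1
      rw [hp]
      field_simp
      ring
    calc (2 * A) ^ p * (13 / 16 * A) = 13 / 16 * 2 ^ p * (A ^ p * A) := by rw [h1]; ring
      _ = 13 / 16 * 2 ^ p * A ^ (p + 1) := by rw [h2]
      _ = 13 / 16 * 2 ^ p * τ ^ ((2 * H + α - 2) / α) := by rw [h3]
  have hgconst : (0:ℝ) ≤ (1 - Real.exp (-2)) * (2 * A) ^ p := by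
    have h5 : (0:ℝ) ≤ (2 * A) ^ p := Real.rpow_nonneg (by positivity) _
    nlinarith
  -- chain of inequalities
  have step2 : ∫ ξ in Set.Ioc A (2 * A), g ξ ≤ ∫ ξ in Set.Ioc A (2 * A), f ξ :=
    setIntegral_mono_on hgint (hInt.mono_set hsub) measurableSet_Ioc hpt
  have step1 : ∫ ξ in Set.Ioc A (2 * A), f ξ ≤ ∫ ξ in Set.Ioi (0:ℝ), f ξ := by
    apply setIntegral_mono_set hInt
    · filter_upwards [ae_restrict_mem measurableSet_Ioi] with ξ hξ
      exact stmt11_nonneg α H τ r hτ.le hξ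
    · exact HasSubset.Subset.eventuallyLE hsub
  have step3 : ∫ ξ in Set.Ioc A (2 * A), g ξ
      = (1 - Real.exp (-2)) * (2 * A) ^ p * (A - (Real.sin (2 * A * r) - Real.sin (A * r)) / r) := by
    rw [hg]
    rw [MeasureTheory.integral_const_mul]
    rw [hIcos]
  calc (13 / 16 * (1 - Real.exp (-2)) * 2 ^ p) * τ ^ ((2 * H + α - 2) / α)
      = (1 - Real.exp (-2)) * ((2 * A) ^ p * (13 / 16 * A)) := by rw [hApow]; ring
    _ = (1 - Real.exp (-2)) * (2 * A) ^ p * (13 / 16 * A) := by ring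
    _ ≤ (1 - Real.exp (-2)) * (2 * A) ^ p
        * (A - (Real.sin (2 * A * r) - Real.sin (A * r)) / r) :=
        mul_le_mul_of_nonneg_left hcosLB hgconst
    _ = ∫ ξ in Set.Ioc A (2 * A), g ξ := step3.symm
    _ ≤ ∫ ξ in Set.Ioc A (2 * A), f ξ := step2
    _ ≤ ∫ ξ in Set.Ioi (0:ℝ), f ξ := step1
end

section
/- Let $\alpha \in (1,2)$, $H \in (1-\alpha/2, 1/2)$, $t > 0$, and $h(\xi) = (1-e^{-2t\xi^{\alpha}})\,\xi^{1-2H-\alpha}$. Then there exists a constant $C > 0$ (depending on $t, H, \alpha$) such that for all $r \ge 1$, $\left|\int_0^{\infty} h(\xi)\,\cos(\xi r)\,d\xi\right| \le C\, r^{\frac{H-1}{2}}$. -/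
set_option maxHeartbeats 1000000


open Real MeasureTheory Set Filter

theorem stmt_14 (α H : ℝ) (hα : 1 < α) (hα2 : α < 2)
    (hH1 : 1 - α / 2 < H) (hH2 : H < 1 / 2)
    (t : ℝ) (ht : 0 < t) :
    ∃ C > 0, ∀ r : ℝ, 1 ≤ r →
      |∫ ξ in Set.Ioi (0:ℝ),
          ((1 - Real.exp (-2 * t * ξ ^ α)) * ξ ^ (1 - 2 * H - α)) * Real.cos (ξ * r)|
        ≤ C * r ^ ((H - 1) / 2) := by
  have hH0 : 0 < H := by linarith
  set β : ℝ := 1 - 2 * H - α with hβdef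
  have hβ : β < -1 := by rw [hβdef]; linarith
  have hβ0 : β < 0 := by linarith
  set h : ℝ → ℝ := fun ξ => (1 - Real.exp (-2 * t * ξ ^ α)) * ξ ^ β with hdef
  set h' : ℝ → ℝ := fun ξ => 2 * t * α * ξ ^ (-(2 * H)) * Real.exp (-2 * t * ξ ^ α)
      + (1 - Real.exp (-2 * t * ξ ^ α)) * (β * ξ ^ (β - 1)) with h'def
  -- measurability
  have mpow : ∀ c : ℝ, Measurable fun x : ℝ => x ^ c := fun c => by measurability
  have mexp : Measurable fun ξ : ℝ => Real.exp (-2 * t * ξ ^ α) :=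
    Real.measurable_exp.comp ((mpow α).const_mul (-2 * t))
  have mh : Measurable h := (measurable_const.sub mexp).mul (mpow β)
  have mh' : Measurable h' :=
    (((mpow (-(2 * H))).const_mul (2 * t * α)).mul mexp).add
      ((measurable_const.sub mexp).mul ((mpow (β - 1)).const_mul β))
  -- pointwise facts
  have hfac : ∀ ξ : ℝ, 0 < ξ → 0 ≤ 1 - Real.exp (-2 * t * ξ ^ α) ∧
      1 - Real.exp (-2 * t * ξ ^ α) ≤ 1 := by
    intro ξ hξ
    have hp : 0 < ξ ^ α := Real.rpow_pos_of_pos hξ α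
    have h1 : Real.exp (-2 * t * ξ ^ α) ≤ 1 := by
      rw [Real.exp_le_one_iff]
      nlinarith
    have h2 : 0 < Real.exp (-2 * t * ξ ^ α) := Real.exp_pos _
    constructor <;> linarith
  have hkey : ∀ y : ℝ, 1 - Real.exp y ≤ -y := fun y => by nlinarith [Real.add_one_le_exp y]
  have hh_nonneg : ∀ ξ : ℝ, 0 < ξ → 0 ≤ h ξ := by
    intro ξ hξ
    exact mul_nonneg (hfac ξ hξ).1 (Real.rpow_nonneg hξ.le β)
  have hh_le1 : ∀ ξ : ℝ, 0 < ξ → h ξ ≤ ξ ^ β := by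
    intro ξ hξ
    calc h ξ ≤ 1 * ξ ^ β :=
          mul_le_mul_of_nonneg_right (hfac ξ hξ).2 (Real.rpow_nonneg hξ.le β)
      _ = ξ ^ β := one_mul _
  have hsum : α + β = 1 - 2 * H := by rw [hβdef]; ring
  have hh_le2 : ∀ ξ : ℝ, 0 < ξ → h ξ ≤ 2 * t * ξ ^ (1 - 2 * H) := by
    intro ξ hξ
    have h1 : 1 - Real.exp (-2 * t * ξ ^ α) ≤ 2 * t * ξ ^ α := by
      have := hkey (-2 * t * ξ ^ α)
      linarith [this]
    calc h ξ ≤ (2 * t * ξ ^ α) * ξ ^ β :=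
          mul_le_mul_of_nonneg_right h1 (Real.rpow_nonneg hξ.le β)
      _ = 2 * t * (ξ ^ α * ξ ^ β) := by ring
      _ = 2 * t * ξ ^ (α + β) := by rw [← Real.rpow_add hξ]
      _ = 2 * t * ξ ^ (1 - 2 * H) := by rw [hsum]
  -- derivative
  have hderiv : ∀ ξ : ℝ, 0 < ξ → HasDerivAt h (h' ξ) ξ := by
    intro ξ hξ
    have d1 : HasDerivAt (fun x : ℝ => -2 * t * x ^ α) (-2 * t * (α * ξ ^ (α - 1))) ξ :=
      (Real.hasDerivAt_rpow_const (Or.inl hξ.ne')).const_mul (-2 * t)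
    have d2 : HasDerivAt (fun x : ℝ => 1 - Real.exp (-2 * t * x ^ α))
        (0 - Real.exp (-2 * t * ξ ^ α) * (-2 * t * (α * ξ ^ (α - 1)))) ξ :=
      (hasDerivAt_const ξ 1).sub d1.exp
    have d3 : HasDerivAt (fun x : ℝ => x ^ β) (β * ξ ^ (β - 1)) ξ :=
      Real.hasDerivAt_rpow_const (Or.inl hξ.ne')
    have d4 : HasDerivAt (fun x : ℝ => (1 - Real.exp (-2 * t * x ^ α)) * x ^ β)
        ((0 - Real.exp (-2 * t * ξ ^ α) * (-2 * t * (α * ξ ^ (α - 1)))) * ξ ^ β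
          + (1 - Real.exp (-2 * t * ξ ^ α)) * (β * ξ ^ (β - 1))) ξ := d2.mul d3
    rw [hdef]
    convert d4 using 1
    simp only [h'def]
    have e1 : (-(2 * H) : ℝ) = (α - 1) + β := by rw [hβdef]; ring
    rw [e1, Real.rpow_add hξ]
    ring
  -- the constant
  set A : ℝ := ∫ ξ in Set.Ioi (0:ℝ), 2 * t * α * ξ ^ (-(2 * H)) * Real.exp (-2 * t * ξ ^ α)
    with hAdef
  have part1int : IntegrableOn
      (fun ξ : ℝ => 2 * t * α * ξ ^ (-(2 * H)) * Real.exp (-2 * t * ξ ^ α)) (Set.Ioi 0) := by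
    have base := integrableOn_rpow_mul_exp_neg_mul_rpow
      (by linarith : (-1:ℝ) < -(2 * H)) (by linarith : (0:ℝ) < α) (by linarith : (0:ℝ) < 2 * t)
    have : (fun ξ : ℝ => 2 * t * α * ξ ^ (-(2 * H)) * Real.exp (-2 * t * ξ ^ α))
        = fun ξ : ℝ => (2 * t * α) * (ξ ^ (-(2 * H)) * Real.exp (-(2 * t) * ξ ^ α)) := by
      funext ξ
      rw [show (-(2 * t) * ξ ^ α : ℝ) = -2 * t * ξ ^ α by ring]
      ring
    rw [this]
    exact base.const_mul _
  have part1nonneg : ∀ ξ : ℝ, 0 < ξ →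
      0 ≤ 2 * t * α * ξ ^ (-(2 * H)) * Real.exp (-2 * t * ξ ^ α) := by
    intro ξ hξ
    have := Real.rpow_nonneg hξ.le (-(2 * H))
    positivity
  have hA0 : 0 ≤ A := by
    rw [hAdef]
    exact setIntegral_nonneg measurableSet_Ioi fun ξ hξ => part1nonneg ξ hξ
  have hC1 : (0:ℝ) < 2 * t / (2 - 2 * H) := div_pos (by linarith) (by linarith)
  refine ⟨2 * t / (2 - 2 * H) + 2 * t + (A + 1), by linarith, ?_⟩
  intro r hr
  have hr0 : (0:ℝ) < r := by linarith
  set δ : ℝ := r ^ ((-1:ℝ)/4) with hδdef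
  have δpos : 0 < δ := Real.rpow_pos_of_pos hr0 _
  have δle1 : δ ≤ 1 := Real.rpow_le_one_of_one_le_of_nonpos hr (by norm_num)
  -- integrability on pieces
  have mcos : Measurable fun ξ : ℝ => Real.cos (ξ * r) :=
    Real.measurable_cos.comp (measurable_id.mul_const r)
  have msin : Measurable fun ξ : ℝ => Real.sin (ξ * r) :=
    Real.measurable_sin.comp (measurable_id.mul_const r)
  have IntOc : IntegrableOn (fun ξ => h ξ * Real.cos (ξ * r)) (Set.Ioc 0 δ) := by
    have gint : IntegrableOn (fun ξ : ℝ => 2 * t * ξ ^ (1 - 2 * H)) (Set.Ioc 0 δ) := by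
      have := (intervalIntegrable_iff_integrableOn_Ioc_of_le δpos.le).mp
        (intervalIntegral.intervalIntegrable_rpow' (by linarith : (-1:ℝ) < 1 - 2 * H))
      exact this.const_mul (2 * t)
    refine gint.mono' ((mh.mul mcos).aestronglyMeasurable) ?_
    filter_upwards [ae_restrict_mem measurableSet_Ioc] with ξ hξ
    have hξ0 : 0 < ξ := hξ.1
    have h0 := hh_nonneg ξ hξ0
    calc ‖h ξ * Real.cos (ξ * r)‖ = |h ξ| * |Real.cos (ξ * r)| := abs_mul _ _
      _ ≤ h ξ * 1 :=
          mul_le_mul (le_of_eq (abs_of_nonneg h0)) (Real.abs_cos_le_one _) (abs_nonneg _) h0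
      _ ≤ 2 * t * ξ ^ (1 - 2 * H) := by rw [mul_one]; exact hh_le2 ξ hξ0
  have IntIoi : IntegrableOn (fun ξ => h ξ * Real.cos (ξ * r)) (Set.Ioi δ) := by
    refine (integrableOn_Ioi_rpow_of_lt hβ δpos).mono' ((mh.mul mcos).aestronglyMeasurable) ?_
    filter_upwards [ae_restrict_mem measurableSet_Ioi] with ξ hξ
    have hξ0 : 0 < ξ := lt_trans δpos hξ
    have h0 := hh_nonneg ξ hξ0
    calc ‖h ξ * Real.cos (ξ * r)‖ = |h ξ| * |Real.cos (ξ * r)| := abs_mul _ _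
      _ ≤ h ξ * 1 :=
          mul_le_mul (le_of_eq (abs_of_nonneg h0)) (Real.abs_cos_le_one _) (abs_nonneg _) h0
      _ ≤ ξ ^ β := by rw [mul_one]; exact hh_le1 ξ hξ0
  -- bound on |h'|
  have habs_h' : ∀ ξ : ℝ, 0 < ξ → |h' ξ| ≤
      2 * t * α * ξ ^ (-(2 * H)) * Real.exp (-2 * t * ξ ^ α) + (α + 2 * H - 1) * ξ ^ (β - 1) := by
    intro ξ hξ
    have ha0 := part1nonneg ξ hξ
    have hb0 : (0:ℝ) ≤ ξ ^ (β - 1) := Real.rpow_nonneg hξ.le _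
    have hc := hfac ξ hξ
    have hnegβ : α + 2 * H - 1 = -β := by rw [hβdef]; ring
    simp only [h'def]
    rw [abs_le]
    constructor <;> nlinarith [mul_nonneg hc.1 hb0,
      mul_nonneg (sub_nonneg.mpr hc.2) hb0, mul_nonneg hb0 hb0]
  have part2int : IntegrableOn (fun ξ : ℝ => (α + 2 * H - 1) * ξ ^ (β - 1)) (Set.Ioi δ) :=
    (integrableOn_Ioi_rpow_of_lt (by linarith : β - 1 < -1) δpos).const_mul _
  have g2int : IntegrableOn (fun ξ : ℝ =>
      (2 * t * α * ξ ^ (-(2 * H)) * Real.exp (-2 * t * ξ ^ α)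
        + (α + 2 * H - 1) * ξ ^ (β - 1)) * r⁻¹) (Set.Ioi δ) :=
    ((part1int.mono_set (Set.Ioi_subset_Ioi δpos.le)).add part2int).mul_const r⁻¹
  have IntH' : IntegrableOn (fun ξ => h' ξ * Real.sin (ξ * r) * r⁻¹) (Set.Ioi δ) := by
    refine g2int.mono' (((mh'.mul msin).mul_const r⁻¹).aestronglyMeasurable) ?_
    filter_upwards [ae_restrict_mem measurableSet_Ioi] with ξ hξ
    have hξ0 : 0 < ξ := lt_trans δpos hξ
    have hb := habs_h' ξ hξ0
    have hrinv : (0:ℝ) ≤ r⁻¹ := by positivity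
    calc ‖h' ξ * Real.sin (ξ * r) * r⁻¹‖ = |h' ξ| * |Real.sin (ξ * r)| * |r⁻¹| := by
          rw [Real.norm_eq_abs, abs_mul, abs_mul]
      _ ≤ |h' ξ| * 1 * r⁻¹ := by
          rw [abs_of_nonneg hrinv]
          exact mul_le_mul_of_nonneg_right
            (mul_le_mul_of_nonneg_left (Real.abs_sin_le_one _) (abs_nonneg _)) hrinv
      _ ≤ (2 * t * α * ξ ^ (-(2 * H)) * Real.exp (-2 * t * ξ ^ α)
            + (α + 2 * H - 1) * ξ ^ (β - 1)) * r⁻¹ := by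
          rw [mul_one]; exact mul_le_mul_of_nonneg_right hb hrinv
  -- integration by parts on (δ, ∞)
  set F : ℝ → ℝ := fun ξ => h ξ * Real.sin (ξ * r) * r⁻¹ with hFdef
  have hFd : ∀ ξ ∈ Set.Ici δ, HasDerivAt F
      (h' ξ * Real.sin (ξ * r) * r⁻¹ + h ξ * Real.cos (ξ * r)) ξ := by
    intro ξ hξ
    have hξ0 : 0 < ξ := lt_of_lt_of_le δpos hξ
    have ds : HasDerivAt (fun x : ℝ => Real.sin (x * r)) (Real.cos (ξ * r) * r) ξ :=
      (hasDerivAt_mul_const r).sin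
    have : HasDerivAt (fun y : ℝ => h y * Real.sin (y * r) * r⁻¹)
        ((h' ξ * Real.sin (ξ * r) + h ξ * (Real.cos (ξ * r) * r)) * r⁻¹) ξ :=
      ((hderiv ξ hξ0).mul ds).mul_const r⁻¹
    rw [hFdef]
    convert this using 1
    field_simp
  have tendF : Tendsto F atTop (nhds 0) := by
    have t0 : Tendsto (fun x : ℝ => x ^ β) atTop (nhds 0) := by
      have := tendsto_rpow_neg_atTop (by linarith : (0:ℝ) < -β)
      simpa using this
    have t1 : Tendsto (fun x : ℝ => x ^ β * r⁻¹) atTop (nhds 0) := by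
      simpa using t0.mul_const r⁻¹
    refine squeeze_zero_norm' ?_ t1
    filter_upwards [eventually_ge_atTop (1:ℝ)] with ξ hξ
    have hξ0 : (0:ℝ) < ξ := by linarith
    have h0 := hh_nonneg ξ hξ0
    have hrinv : (0:ℝ) ≤ r⁻¹ := by positivity
    calc ‖F ξ‖ = |h ξ| * |Real.sin (ξ * r)| * |r⁻¹| := by
          simp only [hFdef]
          rw [Real.norm_eq_abs, abs_mul, abs_mul]
      _ ≤ h ξ * 1 * r⁻¹ := by
          rw [abs_of_nonneg hrinv, abs_of_nonneg h0]
          exact mul_le_mul_of_nonneg_right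
            (mul_le_mul_of_nonneg_left (Real.abs_sin_le_one _) h0) hrinv
      _ ≤ ξ ^ β * r⁻¹ := by
          rw [mul_one]; exact mul_le_mul_of_nonneg_right (hh_le1 ξ hξ0) hrinv
  have IntF' : IntegrableOn
      (fun ξ => h' ξ * Real.sin (ξ * r) * r⁻¹ + h ξ * Real.cos (ξ * r)) (Set.Ioi δ) :=
    IntH'.add IntIoi
  have ibp := integral_Ioi_of_hasDerivAt_of_tendsto' hFd IntF' tendF
  have hsplit2 : (∫ ξ in Set.Ioi δ, (h' ξ * Real.sin (ξ * r) * r⁻¹ + h ξ * Real.cos (ξ * r)))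
      = (∫ ξ in Set.Ioi δ, h' ξ * Real.sin (ξ * r) * r⁻¹)
        + ∫ ξ in Set.Ioi δ, h ξ * Real.cos (ξ * r) := integral_add IntH' IntIoi
  have hIoiδ : (∫ ξ in Set.Ioi δ, h ξ * Real.cos (ξ * r))
      = (0 - F δ) - ∫ ξ in Set.Ioi δ, h' ξ * Real.sin (ξ * r) * r⁻¹ := by
    rw [← ibp, hsplit2]; ring
  -- bound the small piece
  have hδpow : δ ^ (2 - 2 * H) = r ^ ((H - 1) / 2) := by
    rw [hδdef, ← Real.rpow_mul hr0.le,
      show ((-1:ℝ)/4) * (2 - 2 * H) = (H - 1) / 2 by ring]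
  have boundOc : |∫ ξ in Set.Ioc 0 δ, h ξ * Real.cos (ξ * r)|
      ≤ 2 * t / (2 - 2 * H) * r ^ ((H - 1) / 2) := by
    have gint : IntegrableOn (fun ξ : ℝ => 2 * t * ξ ^ (1 - 2 * H)) (Set.Ioc 0 δ) := by
      have := (intervalIntegrable_iff_integrableOn_Ioc_of_le δpos.le).mp
        (intervalIntegral.intervalIntegrable_rpow' (by linarith : (-1:ℝ) < 1 - 2 * H))
      exact this.const_mul (2 * t)
    have hb : ‖∫ ξ in Set.Ioc 0 δ, h ξ * Real.cos (ξ * r)‖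
        ≤ ∫ ξ in Set.Ioc 0 δ, 2 * t * ξ ^ (1 - 2 * H) := by
      refine norm_integral_le_of_norm_le gint ?_
      filter_upwards [ae_restrict_mem measurableSet_Ioc] with ξ hξ
      have hξ0 : 0 < ξ := hξ.1
      have h0 := hh_nonneg ξ hξ0
      calc ‖h ξ * Real.cos (ξ * r)‖ = |h ξ| * |Real.cos (ξ * r)| := abs_mul _ _
        _ ≤ h ξ * 1 :=
            mul_le_mul (le_of_eq (abs_of_nonneg h0)) (Real.abs_cos_le_one _) (abs_nonneg _) h0
        _ ≤ 2 * t * ξ ^ (1 - 2 * H) := by rw [mul_one]; exact hh_le2 ξ hξ0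
    have hval : (∫ ξ in Set.Ioc 0 δ, 2 * t * ξ ^ (1 - 2 * H))
        = 2 * t / (2 - 2 * H) * r ^ ((H - 1) / 2) := by
      rw [← intervalIntegral.integral_of_le δpos.le, intervalIntegral.integral_const_mul,
        integral_rpow (Or.inl (by linarith : (-1:ℝ) < 1 - 2 * H)),
        Real.zero_rpow (by linarith : (1 - 2 * H + 1 : ℝ) ≠ 0),
        show (1 - 2 * H + 1 : ℝ) = 2 - 2 * H by ring, hδpow]
      ring
    rw [Real.norm_eq_abs] at hb
    linarith [hb, le_of_eq hval]
  -- bound F δ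
  have hrpow_neg1 : r⁻¹ ≤ r ^ ((H - 1) / 2) := by
    have : r ^ ((-1:ℝ)) ≤ r ^ ((H - 1) / 2) :=
      Real.rpow_le_rpow_of_exponent_le hr (by linarith)
    rwa [Real.rpow_neg_one] at this
  have boundF : |F δ| ≤ 2 * t * r ^ ((H - 1) / 2) := by
    have h0 := hh_nonneg δ δpos
    have hδ1 : δ ^ (1 - 2 * H) ≤ 1 := Real.rpow_le_one δpos.le δle1 (by linarith)
    have hrinv : (0:ℝ) ≤ r⁻¹ := by positivity
    have : |F δ| ≤ 2 * t * r⁻¹ := by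
      calc |F δ| = |h δ| * |Real.sin (δ * r)| * |r⁻¹| := by
            simp only [hFdef]
            rw [abs_mul, abs_mul]
        _ ≤ h δ * 1 * r⁻¹ := by
            rw [abs_of_nonneg hrinv, abs_of_nonneg h0]
            exact mul_le_mul_of_nonneg_right
              (mul_le_mul_of_nonneg_left (Real.abs_sin_le_one _) h0) hrinv
        _ ≤ (2 * t * δ ^ (1 - 2 * H)) * r⁻¹ := by
            rw [mul_one]; exact mul_le_mul_of_nonneg_right (hh_le2 δ δpos) hrinv
        _ ≤ 2 * t * r⁻¹ := by
            have h5 := mul_le_mul_of_nonneg_right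
              (mul_le_mul_of_nonneg_left hδ1 (by linarith : (0:ℝ) ≤ 2 * t)) hrinv
            simpa using h5
    calc |F δ| ≤ 2 * t * r⁻¹ := this
      _ ≤ 2 * t * r ^ ((H - 1) / 2) :=
          mul_le_mul_of_nonneg_left hrpow_neg1 (by linarith)
  -- bound the tail integral of h' sin / r
  have boundH' : |∫ ξ in Set.Ioi δ, h' ξ * Real.sin (ξ * r) * r⁻¹|
      ≤ (A + 1) * r ^ ((H - 1) / 2) := by
    have hb : ‖∫ ξ in Set.Ioi δ, h' ξ * Real.sin (ξ * r) * r⁻¹‖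
        ≤ ∫ ξ in Set.Ioi δ, (2 * t * α * ξ ^ (-(2 * H)) * Real.exp (-2 * t * ξ ^ α)
            + (α + 2 * H - 1) * ξ ^ (β - 1)) * r⁻¹ := by
      refine norm_integral_le_of_norm_le g2int ?_
      filter_upwards [ae_restrict_mem measurableSet_Ioi] with ξ hξ
      have hξ0 : 0 < ξ := lt_trans δpos hξ
      have hbb := habs_h' ξ hξ0
      have hrinv : (0:ℝ) ≤ r⁻¹ := by positivity
      calc ‖h' ξ * Real.sin (ξ * r) * r⁻¹‖ = |h' ξ| * |Real.sin (ξ * r)| * |r⁻¹| := by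
            rw [Real.norm_eq_abs, abs_mul, abs_mul]
        _ ≤ |h' ξ| * 1 * r⁻¹ := by
            rw [abs_of_nonneg hrinv]
            exact mul_le_mul_of_nonneg_right
              (mul_le_mul_of_nonneg_left (Real.abs_sin_le_one _) (abs_nonneg _)) hrinv
        _ ≤ (2 * t * α * ξ ^ (-(2 * H)) * Real.exp (-2 * t * ξ ^ α)
              + (α + 2 * H - 1) * ξ ^ (β - 1)) * r⁻¹ := by
            rw [mul_one]; exact mul_le_mul_of_nonneg_right hbb hrinv
    have hval : (∫ ξ in Set.Ioi δ, (2 * t * α * ξ ^ (-(2 * H)) * Real.exp (-2 * t * ξ ^ α)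
            + (α + 2 * H - 1) * ξ ^ (β - 1)) * r⁻¹)
        = ((∫ ξ in Set.Ioi δ, 2 * t * α * ξ ^ (-(2 * H)) * Real.exp (-2 * t * ξ ^ α))
            + (α + 2 * H - 1) * ∫ ξ in Set.Ioi δ, ξ ^ (β - 1)) * r⁻¹ := by
      rw [integral_mul_const, integral_add (part1int.mono_set (Set.Ioi_subset_Ioi δpos.le))
        part2int, integral_const_mul]
    have hpart1 : (∫ ξ in Set.Ioi δ, 2 * t * α * ξ ^ (-(2 * H)) * Real.exp (-2 * t * ξ ^ α))
        ≤ A := by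
      rw [hAdef]
      refine setIntegral_mono_set part1int ?_ (HasSubset.Subset.eventuallyLE
        (Set.Ioi_subset_Ioi δpos.le))
      filter_upwards [ae_restrict_mem measurableSet_Ioi] with ξ hξ
      exact part1nonneg ξ hξ
    have hpart2 : (α + 2 * H - 1) * (∫ ξ in Set.Ioi δ, ξ ^ (β - 1)) = δ ^ β := by
      rw [integral_Ioi_rpow_of_lt (by linarith : β - 1 < -1) δpos,
        show (β - 1 + 1 : ℝ) = β by ring]
      have hnegβ : α + 2 * H - 1 = -β := by rw [hβdef]; ring
      rw [hnegβ]
      field_simp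
      exact div_self (ne_of_lt hβ0)
    have hδβ : δ ^ β * r⁻¹ ≤ r ^ ((H - 1) / 2) := by
      have e1 : δ ^ β = r ^ (((-1:ℝ)/4) * β) := by
        rw [hδdef, ← Real.rpow_mul hr0.le]
      have e2 : δ ^ β * r⁻¹ = r ^ (((-1:ℝ)/4) * β + (-1)) := by
        rw [e1, Real.rpow_add hr0, Real.rpow_neg_one]
      rw [e2]
      refine Real.rpow_le_rpow_of_exponent_le hr ?_
      rw [hβdef]
      nlinarith
    have hrinv : (0:ℝ) ≤ r⁻¹ := by positivity
    have hint2 : (0:ℝ) ≤ ∫ ξ in Set.Ioi δ, ξ ^ (β - 1) := by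
      refine setIntegral_nonneg measurableSet_Ioi fun ξ hξ => ?_
      exact Real.rpow_nonneg (le_of_lt (lt_trans δpos hξ)) _
    rw [Real.norm_eq_abs] at hb
    have hfin : ((∫ ξ in Set.Ioi δ, 2 * t * α * ξ ^ (-(2 * H)) * Real.exp (-2 * t * ξ ^ α))
            + (α + 2 * H - 1) * ∫ ξ in Set.Ioi δ, ξ ^ (β - 1)) * r⁻¹
        ≤ (A + 1) * r ^ ((H - 1) / 2) := by
      have hA' : A * r⁻¹ ≤ A * r ^ ((H - 1) / 2) := by
        exact mul_le_mul_of_nonneg_left hrpow_neg1 hA0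
      have h1 : ((∫ ξ in Set.Ioi δ, 2 * t * α * ξ ^ (-(2 * H)) * Real.exp (-2 * t * ξ ^ α))
            + (α + 2 * H - 1) * ∫ ξ in Set.Ioi δ, ξ ^ (β - 1)) * r⁻¹
          ≤ (A + δ ^ β) * r⁻¹ := by
        refine mul_le_mul_of_nonneg_right ?_ hrinv
        rw [hpart2]
        linarith
      have h2 : (A + δ ^ β) * r⁻¹ = A * r⁻¹ + δ ^ β * r⁻¹ := by ring
      nlinarith [hδβ, hA']
    calc |∫ ξ in Set.Ioi δ, h' ξ * Real.sin (ξ * r) * r⁻¹| ≤ _ := hb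
      _ = _ := hval
      _ ≤ (A + 1) * r ^ ((H - 1) / 2) := hfin
  -- assemble
  have hunion : Set.Ioc (0:ℝ) δ ∪ Set.Ioi δ = Set.Ioi 0 := Set.Ioc_union_Ioi_eq_Ioi δpos.le
  have hdisj : Disjoint (Set.Ioc (0:ℝ) δ) (Set.Ioi δ) := by
    rw [Set.disjoint_left]
    intro x hx hx'
    exact absurd hx.2 (not_le.mpr hx')
  have hsplit : (∫ ξ in Set.Ioi (0:ℝ), h ξ * Real.cos (ξ * r))
      = (∫ ξ in Set.Ioc 0 δ, h ξ * Real.cos (ξ * r))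
        + ∫ ξ in Set.Ioi δ, h ξ * Real.cos (ξ * r) := by
    rw [← hunion, setIntegral_union hdisj measurableSet_Ioi IntOc IntIoi]
  have hfinal : |∫ ξ in Set.Ioi (0:ℝ), h ξ * Real.cos (ξ * r)|
      ≤ (2 * t / (2 - 2 * H) + 2 * t + (A + 1)) * r ^ ((H - 1) / 2) := by
    rw [hsplit, hIoiδ]
    have htri : |(∫ ξ in Set.Ioc 0 δ, h ξ * Real.cos (ξ * r))
        + ((0 - F δ) - ∫ ξ in Set.Ioi δ, h' ξ * Real.sin (ξ * r) * r⁻¹)|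
        ≤ |∫ ξ in Set.Ioc 0 δ, h ξ * Real.cos (ξ * r)| + |F δ|
          + |∫ ξ in Set.Ioi δ, h' ξ * Real.sin (ξ * r) * r⁻¹| := by
      have := abs_add_le (∫ ξ in Set.Ioc 0 δ, h ξ * Real.cos (ξ * r))
        ((0 - F δ) - ∫ ξ in Set.Ioi δ, h' ξ * Real.sin (ξ * r) * r⁻¹)
      have h2 := abs_sub (0 - F δ) (∫ ξ in Set.Ioi δ, h' ξ * Real.sin (ξ * r) * r⁻¹)
      have h3 : |(0:ℝ) - F δ| = |F δ| := by rw [zero_sub, abs_neg]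
      linarith
    calc |(∫ ξ in Set.Ioc 0 δ, h ξ * Real.cos (ξ * r))
        + ((0 - F δ) - ∫ ξ in Set.Ioi δ, h' ξ * Real.sin (ξ * r) * r⁻¹)| ≤ _ := htri
      _ ≤ 2 * t / (2 - 2 * H) * r ^ ((H - 1) / 2) + 2 * t * r ^ ((H - 1) / 2)
          + (A + 1) * r ^ ((H - 1) / 2) := by
        exact add_le_add (add_le_add boundOc boundF) boundH'
      _ = (2 * t / (2 - 2 * H) + 2 * t + (A + 1)) * r ^ ((H - 1) / 2) := by ring
  simpa only [hdef] using hfinal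
end

section
/- Let $\beta > 0$ with $\beta = H + \alpha/2$ where $\alpha \in (1,2)$, $H \in (1-\alpha/2,1/2)$. Then there exists a constant $c > 0$ such that for all $r > 0$, $\int_r^{\infty}(1-\cos\xi)\,\xi^{-\beta-1}\,d\xi \ge c\,(r + 3\pi)^{-\beta}$. -/
open Real MeasureTheory

theorem stmt_17 (α H β : ℝ) (hα : 1 < α) (hα2 : α < 2)
    (hH1 : 1 - α / 2 < H) (hH2 : H < 1 / 2) (hβ : β = H + α / 2) :
    ∃ c > 0, ∀ r : ℝ, 0 < r →
      ∫ ξ in Set.Ioi r, (1 - Real.cos ξ) * ξ ^ (-β - 1)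
        ≥ c * (r + 3 * π) ^ (-β) := by
  have hβ1 : 1 < β := by rw [hβ]; linarith
  have hβ0 : 0 < β := by linarith
  have hexp : -β - 1 < -1 := by linarith
  refine ⟨1 / β, by positivity, fun r hr => ?_⟩
  set f : ℝ → ℝ := fun ξ => (1 - Real.cos ξ) * ξ ^ (-β - 1) with hf
  have hπ : (0 : ℝ) < π := Real.pi_pos
  -- basic integrability of power function
  have hint_pow : ∀ s : ℝ, 0 < s → IntegrableOn (fun t : ℝ => t ^ (-β - 1)) (Set.Ioi s) :=
    fun s hs => integrableOn_Ioi_rpow_of_lt hexp hs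
  -- f is integrable on Ioi s for s > 0
  have hmeas : Measurable f := by
    rw [hf]; fun_prop
  have hint_f : ∀ s : ℝ, 0 < s → IntegrableOn f (Set.Ioi s) := by
    intro s hs
    refine ((hint_pow s hs).const_mul 2).mono' (hmeas.aestronglyMeasurable) ?_
    filter_upwards [MeasureTheory.self_mem_ae_restrict measurableSet_Ioi] with t ht
    have ht0 : 0 < t := hs.trans ht
    have h1 : (0:ℝ) ≤ 1 - Real.cos t := by nlinarith [Real.cos_le_one t]
    have h2 : 1 - Real.cos t ≤ 2 := by nlinarith [Real.neg_one_le_cos t]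
    have hp : (0:ℝ) < t ^ (-β - 1) := Real.rpow_pos_of_pos ht0 _
    simp only [hf, Real.norm_eq_abs]
    rw [abs_of_nonneg (by positivity)]
    nlinarith
  have hf_nonneg : ∀ t : ℝ, 0 < t → 0 ≤ f t := by
    intro t ht
    have h1 : (0:ℝ) ≤ 1 - Real.cos t := by nlinarith [Real.cos_le_one t]
    have hp : (0:ℝ) ≤ t ^ (-β - 1) := (Real.rpow_pos_of_pos ht _).le
    positivity
  -- translation identity
  have htrans : ∀ (g : ℝ → ℝ) (s : ℝ),
      (∫ x in Set.Ioi s, g (x + π)) = ∫ x in Set.Ioi (s + π), g x := by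
    intro g s
    have hmp : MeasurePreserving (fun x : ℝ => x + π) volume volume :=
      measurePreserving_add_right volume π
    have hemb : MeasurableEmbedding (fun x : ℝ => x + π) :=
      (Homeomorph.addRight π).measurableEmbedding
    have := hmp.setIntegral_preimage_emb hemb g (Set.Ioi (s + π))
    have hpre : (fun x : ℝ => x + π) ⁻¹' Set.Ioi (s + π) = Set.Ioi s := by
      ext x; simp [Set.mem_preimage, Set.mem_Ioi]
    rwa [hpre] at this
  set A := ∫ ξ in Set.Ioi r, f ξ with hA
  set B := ∫ ξ in Set.Ioi (r + π), f ξ with hB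
  have hBA : B ≤ A := by
    apply setIntegral_mono_set (hint_f r hr)
    · filter_upwards [MeasureTheory.self_mem_ae_restrict measurableSet_Ioi] with t ht
      exact hf_nonneg t (hr.trans ht)
    · exact Filter.Eventually.of_forall (Set.Ioi_subset_Ioi (by linarith))
  -- integrability of shifted f on Ioi r
  have hint_fs : IntegrableOn (fun x => f (x + π)) (Set.Ioi r) := by
    have := hint_f (r + π) (by linarith)
    have hmp : MeasurePreserving (fun x : ℝ => x + π) volume volume :=
      measurePreserving_add_right volume π
    have hemb : MeasurableEmbedding (fun x : ℝ => x + π) :=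
      (Homeomorph.addRight π).measurableEmbedding
    have h2 := (hmp.integrableOn_comp_preimage hemb (f := f) (s := Set.Ioi (r + π))).2 this
    have hpre : (fun x : ℝ => x + π) ⁻¹' Set.Ioi (r + π) = Set.Ioi r := by
      ext x; simp [Set.mem_preimage, Set.mem_Ioi]
    rwa [hpre] at h2
  have hint_gs : IntegrableOn (fun x : ℝ => 2 * (x + π) ^ (-β - 1)) (Set.Ioi r) := by
    have := (hint_pow (r + π) (by linarith)).const_mul 2
    have hmp : MeasurePreserving (fun x : ℝ => x + π) volume volume :=
      measurePreserving_add_right volume π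
    have hemb : MeasurableEmbedding (fun x : ℝ => x + π) :=
      (Homeomorph.addRight π).measurableEmbedding
    have h2 := (hmp.integrableOn_comp_preimage hemb
      (f := fun t : ℝ => 2 * t ^ (-β - 1)) (s := Set.Ioi (r + π))).2 this
    have hpre : (fun x : ℝ => x + π) ⁻¹' Set.Ioi (r + π) = Set.Ioi r := by
      ext x; simp [Set.mem_preimage, Set.mem_Ioi]
    rwa [hpre] at h2
  -- key pointwise bound
  have hkey : ∀ ξ : ℝ, r < ξ →
      2 * (ξ + π) ^ (-β - 1) ≤ f ξ + f (ξ + π) := by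
    intro ξ hξ
    have hξ0 : 0 < ξ := hr.trans hξ
    have hξπ : 0 < ξ + π := by linarith
    have hmono : (ξ + π) ^ (-β - 1) ≤ ξ ^ (-β - 1) :=
      Real.rpow_le_rpow_of_nonpos hξ0 (by linarith) (by linarith)
    have hcos : Real.cos (ξ + π) = -Real.cos ξ := Real.cos_add_pi ξ
    have h1 : (0:ℝ) ≤ 1 - Real.cos ξ := by nlinarith [Real.cos_le_one ξ]
    simp only [hf, hcos]
    nlinarith [Real.rpow_pos_of_pos hξπ (-β - 1)]
  -- A + B ≥ 2 ∫_{Ioi (r+π)} t^{-β-1}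
  have hAB : A + B ≥ 2 * ∫ t in Set.Ioi (r + π), t ^ (-β - 1) := by
    have hshift : B = ∫ x in Set.Ioi r, f (x + π) := (htrans f r).symm
    have hshift2 : (∫ t in Set.Ioi (r + π), (2:ℝ) * t ^ (-β - 1))
        = ∫ x in Set.Ioi r, 2 * (x + π) ^ (-β - 1) :=
      (htrans (fun t => 2 * t ^ (-β - 1)) r).symm
    rw [hA, hshift, ← MeasureTheory.integral_add (hint_f r hr) hint_fs,
      ← MeasureTheory.integral_const_mul, hshift2]
    apply setIntegral_mono_on hint_gs ((hint_f r hr).add hint_fs) measurableSet_Ioi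
    intro x hx
    exact hkey x hx
  have hval : (∫ t in Set.Ioi (r + π), t ^ (-β - 1)) = (r + π) ^ (-β) / β := by
    rw [integral_Ioi_rpow_of_lt hexp (by linarith)]
    have : -β - 1 + 1 = -β := by ring
    rw [this]
    field_simp
  have hstep : A ≥ (1 / β) * (r + π) ^ (-β) := by
    rw [hval] at hAB
    have : 2 * A ≥ 2 * ((r + π) ^ (-β) / β) := by linarith
    have h2 : A ≥ (r + π) ^ (-β) / β := by linarith
    calc A ≥ (r + π) ^ (-β) / β := h2
      _ = (1 / β) * (r + π) ^ (-β) := by ring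
  refine le_trans ?_ hstep
  have hmono2 : (r + 3 * π) ^ (-β) ≤ (r + π) ^ (-β) :=
    Real.rpow_le_rpow_of_nonpos (by linarith) (by linarith) (by linarith)
  have hc : (0:ℝ) < 1 / β := by positivity
  nlinarith [Real.rpow_pos_of_pos (show (0:ℝ) < r + 3*π by linarith) (-β)]
end
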